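/- Let φ : U × V → W be a bilinear map with dim U = m, dim V = n, rank exactly m + n (i.e., the minimal length of a bilinear algorithm for φ is m + n), trivial left kernel, and such that every basis of U contains a left φ-regular element. Then every bilinear algorithm for φ of length m + n is two-component. -/

import Mathlib

variable {F U V W : Type*} [Field F]
  [AddCommGroup U] [AddCommGroup V] [AddCommGroup W]
  [Module F U] [Module F V] [Module F W]

section Helpers
open Submodule Module

lemma range_coe_image {α β : Type*} (f : α → β) (s : Finset α) :
    Set.range (fun i : s => f i) = f '' ↑s := by
  ext y; constructor
  · rintro ⟨⟨i, hi⟩, rfl⟩; exact ⟨i, hi, rfl⟩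
  · rintro ⟨i, hi, rfl⟩; exact ⟨⟨i, hi⟩, rfl⟩

lemma range_coe_image_set {α β : Type*} (f : α → β) (s : Set α) :
    Set.range (fun i : s => f i) = f '' s := by
  ext y; constructor
  · rintro ⟨⟨i, hi⟩, rfl⟩; exact ⟨i, hi, rfl⟩
  · rintro ⟨i, hi, rfl⟩; exact ⟨⟨i, hi⟩, rfl⟩

lemma span_eq_top_of_ker {X : Type*} [AddCommGroup X] [Module F X] [FiniteDimensional F X]
    {ι : Type*} (c : ι → Module.Dual F X)
    (h : ∀ x : X, (∀ i, c i x = 0) → x = 0) :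
    Submodule.span F (Set.range c) = ⊤ := by
  set Wm := Submodule.span F (Set.range c) with hWm
  have hco : Wm.dualCoannihilator = ⊥ := by
    rw [Submodule.eq_bot_iff]
    intro x hx
    rw [Submodule.mem_dualCoannihilator] at hx
    exact h x fun i => hx _ (Submodule.subset_span ⟨i, rfl⟩)
  have h2 := Subspace.finrank_add_finrank_dualCoannihilator_eq Wm
  rw [hco, finrank_bot, add_zero] at h2
  apply Submodule.eq_top_of_finrank_eq
  rw [h2, Subspace.dual_finrank_eq]

end Helpers

/-- `(f, g, z)` is a bilinear algorithm of length `r` for `φ`. -/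
def IsBilinearAlgorithm (φ : U →ₗ[F] V →ₗ[F] W) {r : ℕ}
    (f : Fin r → Module.Dual F U) (g : Fin r → Module.Dual F V)
    (z : Fin r → W) : Prop :=
  ∀ u v, φ u v = ∑ k : Fin r, (f k u * g k v) • z k

/-- A bilinear algorithm is two-component if the index set splits into `I` and `J` so that
the `f`'s indexed by `I` form a basis of `U*` and the `g`'s indexed by `J` form a basis
of `V*`. -/
def IsTwoComponent {r : ℕ}
    (f : Fin r → Module.Dual F U) (g : Fin r → Module.Dual F V) : Prop :=
  ∃ I J : Finset (Fin r), Disjoint I J ∧ I ∪ J = Finset.univ ∧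
    LinearIndependent F (fun i : I => f i) ∧ Submodule.span F (f '' I) = ⊤ ∧
    LinearIndependent F (fun j : J => g j) ∧ Submodule.span F (g '' J) = ⊤

section Helpers2
open Submodule Module

lemma shorten {r : ℕ} (φ : U →ₗ[F] V →ₗ[F] W) (f : Fin r → Module.Dual F U)
    (g : Fin r → Module.Dual F V) (z : Fin r → W)
    (halg : IsBilinearAlgorithm φ f g z) (k0 : Fin r) (hg : g k0 = 0) :
    ∃ (f' : Fin (r-1) → Module.Dual F U) (g' : Fin (r-1) → Module.Dual F V)
      (z' : Fin (r-1) → W), IsBilinearAlgorithm φ f' g' z' := by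
  have hr : 0 < r := k0.pos
  let j : Fin (r-1) → Fin r := fun k =>
    if h : (k : ℕ) < (k0 : ℕ) then ⟨k, by omega⟩ else ⟨(k : ℕ) + 1, by omega⟩
  have hval : ∀ k : Fin (r-1), (j k : ℕ) = if (k : ℕ) < (k0 : ℕ) then (k : ℕ) else (k : ℕ) + 1 := by
    intro k
    by_cases h : (k : ℕ) < (k0 : ℕ) <;> simp [j, h]
  have hjinj : Function.Injective j := by
    intro a b hab
    have := congrArg Fin.val hab
    rw [hval a, hval b] at this
    apply Fin.ext
    by_cases h1 : (a : ℕ) < (k0 : ℕ) <;> by_cases h2 : (b : ℕ) < (k0 : ℕ) <;>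
      simp [h1, h2] at this <;> omega
  have himg : Finset.univ.image j = Finset.univ.erase k0 := by
    ext x
    simp only [Finset.mem_image, Finset.mem_erase, Finset.mem_univ, and_true, true_and]
    constructor
    · rintro ⟨k, rfl⟩
      intro hk
      have := congrArg Fin.val hk
      rw [hval k] at this
      by_cases h : (k : ℕ) < (k0 : ℕ) <;> simp [h] at this <;> omega
    · intro hx
      have hxk : (x : ℕ) ≠ (k0 : ℕ) := fun h => hx (Fin.ext h)
      by_cases h : (x : ℕ) < (k0 : ℕ)
      · refine ⟨⟨(x : ℕ), by omega⟩, ?_⟩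
        apply Fin.ext
        rw [hval]
        simp [h]
      · refine ⟨⟨(x : ℕ) - 1, by omega⟩, ?_⟩
        apply Fin.ext
        rw [hval]
        have : ¬ ((x : ℕ) - 1 < (k0 : ℕ)) := by simp; omega
        rw [if_neg this]
        simp; omega
  refine ⟨f ∘ j, g ∘ j, z ∘ j, fun u v => ?_⟩
  have h1 := halg u v
  set t : Fin r → W := fun k => (f k u * g k v) • z k with ht
  have h2 : ∑ k : Fin (r-1), t (j k) = ∑ x ∈ Finset.univ.erase k0, t x := by
    rw [← himg]
    exact (Finset.sum_image (fun a _ b _ hab => hjinj hab)).symm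
  have h3 : ∑ x ∈ Finset.univ.erase k0, t x = ∑ x : Fin r, t x := by
    have := Finset.sum_erase_add Finset.univ t (Finset.mem_univ k0)
    have ht0 : t k0 = 0 := by simp [ht, hg]
    rw [ht0, add_zero] at this
    exact this
  show φ u v = ∑ k : Fin (r-1), (f (j k) u * g (j k) v) • z (j k)
  rw [h1, ← h3, ← h2]

end Helpers2

open Submodule Module in
theorem optimal_algorithms_are_two_component
    [FiniteDimensional F U] [FiniteDimensional F V] [FiniteDimensional F W]
    (m n : ℕ) (hm : Module.finrank F U = m) (hn : Module.finrank F V = n)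
    (φ : U →ₗ[F] V →ₗ[F] W)
    (hrank_le : ∃ (f : Fin (m + n) → Module.Dual F U)
      (g : Fin (m + n) → Module.Dual F V) (z : Fin (m + n) → W),
      IsBilinearAlgorithm φ f g z)
    (hrank_ge : ∀ (r : ℕ) (f : Fin r → Module.Dual F U)
      (g : Fin r → Module.Dual F V) (z : Fin r → W),
      IsBilinearAlgorithm φ f g z → m + n ≤ r)
    (hker : ∀ u : U, (∀ v : V, φ u v = 0) → u = 0)
    (hbasis : ∀ (b : Basis (Fin m) F U),
      ∃ i, Function.Injective fun v : V => φ (b i) v)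
    (f : Fin (m + n) → Module.Dual F U) (g : Fin (m + n) → Module.Dual F V)
    (z : Fin (m + n) → W) (halg : IsBilinearAlgorithm φ f g z) :
    IsTwoComponent f g := by
    classical
  -- f spans the dual of U
  have hfin : ∀ u : U, (∀ k, f k u = 0) → u = 0 := by
    intro u hu
    apply hker
    intro v
    rw [halg u v]
    apply Finset.sum_eq_zero
    intro k _
    rw [hu k, zero_mul, zero_smul]
  have hfspan : Submodule.span F (Set.range f) = ⊤ := span_eq_top_of_ker f hfin
  -- extract an index set I on which f is a basis of the dual
  obtain ⟨t, hts, htspan, htli⟩ := exists_linearIndependent F (Set.range f)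
  rw [hfspan] at htspan
  choose idx hidx using fun x : t => hts x.2
  set I : Finset (Fin (m+n)) :=
    Finset.univ.filter (fun k => ∃ h : f k ∈ t, idx ⟨f k, h⟩ = k) with hI
  have hmemI : ∀ k, k ∈ I ↔ ∃ h : f k ∈ t, idx ⟨f k, h⟩ = k := by
    intro k; simp [hI]
  have himgI : f '' ↑I = t := by
    apply Set.Subset.antisymm
    · rintro y ⟨k, hk, rfl⟩
      obtain ⟨h, -⟩ := (hmemI k).1 hk
      exact h
    · intro x hx
      refine ⟨idx ⟨x, hx⟩, ?_, hidx ⟨x, hx⟩⟩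
      rw [Finset.mem_coe, hmemI]
      have hfx : f (idx ⟨x, hx⟩) ∈ t := by rw [hidx ⟨x, hx⟩]; exact hx
      refine ⟨hfx, ?_⟩
      congr 1
      exact Subtype.ext (hidx ⟨x, hx⟩)
  have hinjI : ∀ k1 ∈ I, ∀ k2 ∈ I, f k1 = f k2 → k1 = k2 := by
    intro k1 h1 k2 h2 hf12
    obtain ⟨m1, e1⟩ := (hmemI k1).1 h1
    obtain ⟨m2, e2⟩ := (hmemI k2).1 h2
    rw [← e1, ← e2]
    congr 1
    exact Subtype.ext hf12
  have hliI : LinearIndependent F (fun i : I => f i) := by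
    have he : ∀ i : I, f ↑i ∈ t := fun i => himgI ▸ ⟨↑i, i.2, rfl⟩
    have hc : (fun i : I => f ↑i) =
        (fun x : t => (x : Module.Dual F U)) ∘ (fun i : I => (⟨f ↑i, he i⟩ : t)) := rfl
    rw [hc]
    apply htli.comp
    intro i1 i2 h12
    have h13 := congrArg Subtype.val h12
    exact Subtype.ext (hinjI _ i1.2 _ i2.2 h13)
  have hspanI : Submodule.span F (f '' ↑I) = ⊤ := by rw [himgI]; exact htspan
  let B : Basis I F (Module.Dual F U) :=
    Basis.mk hliI (by rw [range_coe_image, himgI]; exact htspan.ge)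
  have hcardI : I.card = m := by
    have h1 := Module.finrank_eq_card_basis B
    rw [Subspace.dual_finrank_eq, hm, Fintype.card_coe] at h1
    omega
  -- the dual basis of U
  let b : Basis I F U := B.dualBasis.map (Module.evalEquiv F U).symm
  have hdb : ∀ i j : I, f ↑i (b j) = if i = j then 1 else 0 := by
    intro i j
    have h1 : b j = (Module.evalEquiv F U).symm (B.dualBasis j) := by
      simp [b, Basis.map_apply]
    have h2 : f ↑i = B i := (Basis.mk_apply hliI _ i).symm
    rw [h1, h2, Module.apply_evalEquiv_symm_apply, Basis.dualBasis_apply_self]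
  -- get the regular element
  have hcard' : Fintype.card I = m := by rw [Fintype.card_coe, hcardI]
  obtain ⟨i', hreg⟩ := hbasis (b.reindex (Fintype.equivFinOfCardEq hcard'))
  set i0 : I := (Fintype.equivFinOfCardEq hcard').symm i' with hi0
  have hregb : ∀ v : V, φ (b i0) v = 0 → v = 0 := by
    intro v hv
    apply hreg
    show φ (b.reindex (Fintype.equivFinOfCardEq hcard') i') v
       = φ (b.reindex (Fintype.equivFinOfCardEq hcard') i') 0
    rw [map_zero, Basis.reindex_apply, ← hi0, hv]
  have hi0I : (↑i0 : Fin (m+n)) ∈ I := i0.2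
  -- schema: the g's where f · (b i0) ≠ 0 span the dual of V
  have hCtop : Submodule.span F (g '' {k | f k (b i0) ≠ 0}) = ⊤ := by
    rw [← range_coe_image_set g _]
    apply span_eq_top_of_ker
    intro v hv
    apply hregb
    rw [halg (b i0) v]
    apply Finset.sum_eq_zero
    intro k _
    by_cases hk : f k (b i0) = 0
    · rw [hk, zero_mul, zero_smul]
    · have h4 := hv ⟨k, hk⟩
      simp only at h4
      rw [h4, mul_zero, zero_smul]
  have hfinV : finrank F (Module.Dual F V) = n := by rw [Subspace.dual_finrank_eq, hn]
  have hfinU : finrank F (Module.Dual F U) = m := by rw [Subspace.dual_finrank_eq, hm]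
  -- generic: a set containing {k | f k (b i0) ≠ 0} spans together with g i0
  have hgen : ∀ s : Set (Fin (m+n)), ((↑(Iᶜ) : Set (Fin (m+n))) ∩ {k | f k (b i0) ≠ 0}) ⊆ s →
      Submodule.span F {g ↑i0} ⊔ Submodule.span F (g '' s) = ⊤ := by
    intro s hs
    rw [eq_top_iff, ← hCtop, ← Submodule.span_insert, ← Set.image_insert_eq]
    apply Submodule.span_mono
    apply Set.image_mono
    intro k hk
    by_cases hkI : k ∈ I
    · have h2 : (⟨k, hkI⟩ : I) = i0 := by
        by_contra hne
        have h3 := hdb ⟨k, hkI⟩ i0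
        rw [if_neg hne] at h3
        exact hk h3
      exact Set.mem_insert_iff.2 (Or.inl (congrArg Subtype.val h2))
    · exact Set.mem_insert_of_mem _ (hs ⟨by simpa using hkI, hk⟩)
  set Y : Submodule F (Module.Dual F V) := Submodule.span F (g '' ↑(Iᶜ)) with hYdef
  have htop : Submodule.span F {g ↑i0} ⊔ Y = ⊤ := hgen _ Set.inter_subset_left
  by_cases hY : Y = ⊤
  · -- case A : two-component with I, Iᶜ
    have hcardJ : Fintype.card ↥(Iᶜ) = finrank F (Module.Dual F V) := by
      rw [Fintype.card_coe, Finset.card_compl, Fintype.card_fin, hcardI, hfinV]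
      omega
    have hliJ : LinearIndependent F (fun j : ↥(Iᶜ) => g ↑j) :=
      linearIndependent_of_top_le_span_of_card_eq_finrank
        (by rw [range_coe_image]; exact hY.ge) hcardJ
    exact ⟨I, Iᶜ, disjoint_compl_right, Finset.union_compl I, hliI, hspanI, hliJ, hY⟩
  · -- case B
    have hgi0Y : g ↑i0 ∉ Y := by
      intro hmem
      apply hY
      rw [eq_top_iff, ← htop]
      exact sup_le ((Submodule.span_singleton_le_iff_mem _ _).2 hmem) le_rfl
    have hgi0ne : g ↑i0 ≠ 0 := fun h => hgi0Y (h ▸ Y.zero_mem)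
    have haux : ∀ S : Submodule F (Module.Dual F V),
        Submodule.span F {g ↑i0} ⊔ S = ⊤ → n ≤ finrank F S + 1 := by
      intro S hS
      have h2 := Submodule.finrank_sup_add_finrank_inf_eq (Submodule.span F {g ↑i0}) S
      rw [hS, finrank_span_singleton hgi0ne, finrank_top, hfinV] at h2
      omega
    set Cset : Finset (Fin (m+n)) :=
      Finset.univ.filter (fun k => k ∉ I ∧ f k (b i0) ≠ 0) with hCset
    have hCsubJ : (↑Cset : Set (Fin (m+n))) ⊆ ↑(Iᶜ) := by
      intro k hk
      simp only [hCset, Finset.coe_filter, Set.mem_setOf_eq] at hk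
      simpa using hk.2.1
    have htopC : Submodule.span F {g ↑i0} ⊔ Submodule.span F (g '' ↑Cset) = ⊤ := by
      apply hgen
      rintro k ⟨hk1, hk2⟩
      simp only [hCset, Finset.coe_filter, Set.mem_setOf_eq]
      exact ⟨Finset.mem_univ _, by simpa using hk1, hk2⟩
    have hYlt : finrank F Y < n := by
      have h5 := Submodule.finrank_lt hY
      rwa [hfinV] at h5
    have hC1 : n ≤ finrank F (Submodule.span F (g '' ↑Cset)) + 1 := haux _ htopC
    have hCle : Submodule.span F (g '' ↑Cset) ≤ Y :=
      Submodule.span_mono (Set.image_mono (f := g) hCsubJ)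
    have hspanCY : Submodule.span F (g '' ↑Cset) = Y := by
      apply Submodule.eq_of_le_of_finrank_le hCle
      have := Submodule.finrank_mono hCle
      omega
    -- the claim : a good swap index j0
    have hclaim : ∃ j0 ∈ Cset, g j0 ∈ Submodule.span F (g '' (↑(Iᶜ) \ {j0})) := by
      by_cases hCli : LinearIndependent F (fun c : ↥Cset => g ↑c)
      · -- independent case
        have hicard : Fintype.card ↥Cset = finrank F Y := by
          have h6 := finrank_span_eq_card hCli
          rw [range_coe_image, hspanCY] at h6
          omega
        obtain ⟨j1, hj1J, hj1C⟩ : ∃ j1 ∈ Iᶜ, j1 ∉ Cset := by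
          have hCsubJ' : Cset ⊆ Iᶜ := fun k hk => hCsubJ hk
          have hcc : Cset.card < (Iᶜ).card := by
            rw [Finset.card_compl, Fintype.card_fin, hcardI]
            have h7 : Cset.card = finrank F Y := by rw [← hicard, Fintype.card_coe]
            omega
          have hne : Cset ≠ Iᶜ := by
            intro h
            rw [h] at hcc
            exact lt_irrefl _ hcc
          exact Finset.exists_of_ssubset (hCsubJ'.ssubset_of_ne hne)
        have hgj1Y : g j1 ∈ Y := Submodule.subset_span ⟨j1, by simpa using hj1J, rfl⟩
        have hgj1ne : g j1 ≠ 0 := by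
          intro h0
          obtain ⟨f', g', z', halg'⟩ := shorten φ f g z halg j1 h0
          have h8 := hrank_ge _ f' g' z' halg'
          have hpos : 0 < m + n := j1.pos
          omega
        let Bc := Basis.span hCli
        have hj1mem : g j1 ∈ Submodule.span F (Set.range fun c : ↥Cset => g ↑c) := by
          rw [range_coe_image, hspanCY]; exact hgj1Y
        set y1 : Submodule.span F (Set.range fun c : ↥Cset => g ↑c) := ⟨g j1, hj1mem⟩ with hy1
        have hrepr := Bc.sum_repr y1
        have hsum : ∑ c : ↥Cset, (Bc.repr y1 c) • g ↑c = g j1 := by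
          have h9 := congrArg (Submodule.subtype _) hrepr
          simpa [Bc, Basis.span_apply, map_sum] using h9
        obtain ⟨j0, hj0⟩ : ∃ c : ↥Cset, Bc.repr y1 c ≠ 0 := by
          by_contra hall
          push_neg at hall
          apply hgj1ne
          rw [← hsum]
          exact Finset.sum_eq_zero fun c _ => by rw [hall c, zero_smul]
        refine ⟨↑j0, j0.2, ?_⟩
        have hsolve : g ↑j0 = (Bc.repr y1 j0)⁻¹ •
            (g j1 - ∑ c ∈ Finset.univ.erase j0, (Bc.repr y1 c) • g ↑c) := by
          rw [← hsum, ← Finset.sum_erase_add Finset.univ _ (Finset.mem_univ j0),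
            add_sub_cancel_left, inv_smul_smul₀ hj0]
        rw [hsolve]
        apply Submodule.smul_mem
        apply Submodule.sub_mem
        · apply Submodule.subset_span
          refine ⟨j1, ⟨by simpa using hj1J, ?_⟩, rfl⟩
          simp only [Set.mem_singleton_iff]
          intro h
          exact hj1C (h ▸ j0.2)
        · apply Submodule.sum_mem
          intro c hc
          apply Submodule.smul_mem
          apply Submodule.subset_span
          refine ⟨↑c, ⟨hCsubJ c.2, ?_⟩, rfl⟩
          simp only [Set.mem_singleton_iff]
          intro h
          exact (Finset.ne_of_mem_erase hc) (Subtype.ext h)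
      · -- dependent case
        rw [linearIndependent_iff_notMem_span] at hCli
        push_neg at hCli
        obtain ⟨c, hc⟩ := hCli
        refine ⟨↑c, c.2, ?_⟩
        refine Submodule.span_mono ?_ hc
        rintro y ⟨d, hd, rfl⟩
        simp only [Set.mem_diff, Set.mem_singleton_iff] at hd ⊢
        exact ⟨↑d, ⟨hCsubJ d.2, fun h => hd.2 (Subtype.ext h)⟩, rfl⟩
    obtain ⟨j0, hj0C, hj0span⟩ := hclaim
    have hj0I : j0 ∉ I := by
      have := (Finset.mem_filter.1 hj0C).2
      exact this.1
    have hfj0 : f j0 (b i0) ≠ 0 := by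
      have := (Finset.mem_filter.1 hj0C).2
      exact this.2
    set I' : Finset (Fin (m+n)) := insert j0 (I.erase ↑i0) with hI'
    have hj0ne_i0 : j0 ≠ ↑i0 := fun h => hj0I (h ▸ hi0I)
    have hm1 : 1 ≤ m := by
      rw [← hcardI]
      exact Finset.card_pos.2 ⟨↑i0, hi0I⟩
    have hcardI' : I'.card = m := by
      rw [hI', Finset.card_insert_of_notMem
        (fun hmem => hj0I (Finset.mem_of_mem_erase hmem)),
        Finset.card_erase_of_mem hi0I, hcardI]
      omega
    have hi0nI' : (↑i0 : Fin (m+n)) ∉ I' := by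
      rw [hI', Finset.mem_insert]
      rintro (h | h)
      · exact hj0ne_i0 h.symm
      · exact Finset.notMem_erase _ _ h
    -- f side
    have hlier : LinearIndependent F (fun i : ↥(I.erase ↑i0) => f ↑i) := by
      have hc : (fun i : ↥(I.erase ↑i0) => f ↑i) =
          (fun i : ↥I => f ↑i) ∘ (fun i : ↥(I.erase ↑i0) =>
            (⟨↑i, Finset.mem_of_mem_erase i.2⟩ : ↥I)) := rfl
      rw [hc]
      apply hliI.comp
      intro a b hab
      simp only [Subtype.mk.injEq] at hab
      exact Subtype.ext hab
    have hfj0ns : f j0 ∉ Submodule.span F (f '' ↑(I.erase ↑i0)) := by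
      intro hmem
      have hsub2 : ∀ x ∈ f '' ↑(I.erase ↑i0),
          x ∈ LinearMap.ker ((Module.Dual.eval F U) (b i0)) := by
        rintro x ⟨k, hk, rfl⟩
        have hkI : k ∈ I := Finset.mem_of_mem_erase hk
        have hkne : (⟨k, hkI⟩ : I) ≠ i0 := by
          intro h
          exact (Finset.ne_of_mem_erase hk) (congrArg Subtype.val h)
        have h10 := hdb ⟨k, hkI⟩ i0
        rw [if_neg hkne] at h10
        simpa [LinearMap.mem_ker, Module.Dual.eval_apply] using h10
      have hle := Submodule.span_le.2 hsub2
      have h11 := hle hmem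
      simp only [LinearMap.mem_ker, Module.Dual.eval_apply] at h11
      exact hfj0 h11
    have hfrer : finrank F (Submodule.span F (f '' ↑(I.erase ↑i0))) = m - 1 := by
      have h12 := finrank_span_eq_card hlier
      rw [range_coe_image] at h12
      rw [h12, Fintype.card_coe, Finset.card_erase_of_mem hi0I, hcardI]
    have hspanI' : Submodule.span F (f '' ↑I') = ⊤ := by
      have hlt : Submodule.span F (f '' ↑(I.erase ↑i0)) < Submodule.span F (f '' ↑I') := by
        apply lt_of_le_of_ne
        · apply Submodule.span_mono
          apply Set.image_mono
          intro k hk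
          rw [hI']
          exact Finset.mem_insert_of_mem (Finset.mem_coe.1 hk)
        · intro heq
          apply hfj0ns
          rw [heq]
          exact Submodule.subset_span ⟨j0, by simp [hI'], rfl⟩
      have h13 : finrank F (Submodule.span F (f '' ↑I')) ≤ finrank F (Module.Dual F U) :=
        Submodule.finrank_le _
      have h14 := Submodule.finrank_lt_finrank_of_lt hlt
      apply Submodule.eq_top_of_finrank_eq
      omega
    have hliI' : LinearIndependent F (fun i : ↥I' => f ↑i) :=
      linearIndependent_of_top_le_span_of_card_eq_finrank
        (by rw [range_coe_image]; exact hspanI'.ge)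
        (by rw [Fintype.card_coe, hcardI', hfinU])
    -- g side
    have hi0J' : (↑i0 : Fin (m+n)) ∈ I'ᶜ := Finset.mem_compl.2 hi0nI'
    have hspanJ' : Submodule.span F (g '' ↑(I'ᶜ)) = ⊤ := by
      rw [eq_top_iff, ← htop]
      apply sup_le
      · exact (Submodule.span_singleton_le_iff_mem _ _).2
          (Submodule.subset_span ⟨↑i0, by simpa using hi0J', rfl⟩)
      · rw [hYdef, Submodule.span_le]
        rintro x ⟨k, hk, rfl⟩
        have hkI : k ∉ I := by simpa using hk
        by_cases hkj : k = j0
        · subst hkj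
          have hss : (↑(Iᶜ) : Set (Fin (m+n))) \ {k} ⊆ ↑(I'ᶜ) := by
            rintro a ⟨haJ, hane⟩
            have haI : a ∉ I := by simpa using haJ
            simp only [Finset.coe_compl, Set.mem_compl_iff, Finset.mem_coe]
            rw [hI', Finset.mem_insert]
            rintro (h | h)
            · exact hane (by simpa using h)
            · exact haI (Finset.mem_of_mem_erase h)
          exact Submodule.span_mono (Set.image_mono (f := g) hss) hj0span
        · apply Submodule.subset_span
          refine ⟨k, ?_, rfl⟩
          simp only [Finset.coe_compl, Set.mem_compl_iff, Finset.mem_coe]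
          rw [hI', Finset.mem_insert]
          rintro (h | h)
          · exact hkj h
          · exact hkI (Finset.mem_of_mem_erase h)
    have hliJ' : LinearIndependent F (fun j : ↥(I'ᶜ) => g ↑j) :=
      linearIndependent_of_top_le_span_of_card_eq_finrank
        (by rw [range_coe_image]; exact hspanJ'.ge)
        (by rw [Fintype.card_coe, Finset.card_compl, Fintype.card_fin, hcardI', hfinV]; omega)
    exact ⟨I', I'ᶜ, disjoint_compl_right, Finset.union_compl I', hliI', hspanI', hliJ', hspanJ'⟩
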